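/- Let v_1 > 0, v_2 ≥ 0 and 0 ≤ ν ≤ 1. Let (S_n) be real random variables converging in distribution to N(0, v_1 + ν v_2), and let (B_n) be positive random variables converging in probability to v_1 + v_2. Then for every c > 0, lim_{n→∞} P(|S_n| / √B_n > c) = 2 Φ(−c · √((v_1 + v_2)/(v_1 + ν v_2))), where Φ is the standard normal cumulative distribution function. Moreover this limit is ≤ 2 Φ(−c), with strict inequality if and only if ν < 1 and v_2 > 0. (This is the precise content of Corollaries 1 and 2 of the paper: the score test T_S and log-rank test T_L, whose variance estimators converge to v_1 + v_2 while their numerators are asymptotically N(0, v_1 + ν v_2) with v_1 = E[Var(O | Z)] and v_2 = Var(E[O | Z]), are valid when ν = 1 or v_2 = 0 and strictly conservative when ν < 1 and v_2 > 0.) -/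

import Mathlib

open MeasureTheory ProbabilityTheory Filter Finset Topology
open scoped NNReal ENNReal

/-- Convergence in distribution of a sequence of real random variables to a limit
law `μ`, formulated as weak convergence tested against bounded continuous functions. -/
def TendstoInDistribution {Ω : Type*} [MeasurableSpace Ω] (P : Measure Ω)
    (X : ℕ → Ω → ℝ) (μ : Measure ℝ) : Prop :=
  ∀ f : BoundedContinuousFunction ℝ ℝ,
    Tendsto (fun n => ∫ ω, f (X n ω) ∂P) atTop (𝓝 (∫ x, f x ∂μ))

/-- The cumulative distribution function `Φ` of the standard normal law `N(0,1)`. -/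
noncomputable def stdGaussianCDF (x : ℝ) : ℝ := ((gaussianReal 0 1) (Set.Iic x)).toReal

lemma gaussianPDF_le_one (t : ℝ) : gaussianPDF 0 1 t ≤ 1 := by
  rw [gaussianPDF]
  refine ENNReal.ofReal_le_one.mpr ?_
  rw [gaussianPDFReal]
  have h1 : Real.exp (-(t - 0)^2 / (2 * (1:ℝ≥0))) ≤ 1 := by
    rw [Real.exp_le_one_iff]
    have : (0:ℝ) ≤ (t-0)^2 := sq_nonneg _
    simp only [NNReal.coe_one, mul_one]
    nlinarith
  have h2 : ((Real.sqrt (2 * Real.pi * (1:ℝ≥0)))⁻¹ : ℝ) ≤ 1 := by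
    rw [inv_le_one_iff₀]
    right
    rw [show ((1:ℝ)) = Real.sqrt 1 by simp]
    refine Real.sqrt_le_sqrt ?_
    simp only [NNReal.coe_one, mul_one]
    nlinarith [Real.pi_gt_three]
  have h3 : (0:ℝ) ≤ (Real.sqrt (2 * Real.pi * (1:ℝ≥0)))⁻¹ := by positivity
  nlinarith [Real.exp_pos (-(t - 0)^2 / (2 * (1:ℝ≥0)))]

lemma stdGaussian_Ioc_le (x y : ℝ) :
    gaussianReal 0 1 (Set.Ioc x y) ≤ ENNReal.ofReal (y - x) := by
  rw [gaussianReal_apply 0 one_ne_zero]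
  calc ∫⁻ t in Set.Ioc x y, gaussianPDF 0 1 t
      ≤ ∫⁻ _ in Set.Ioc x y, 1 := lintegral_mono fun t => gaussianPDF_le_one t
    _ = volume (Set.Ioc x y) := by simp
    _ = ENNReal.ofReal (y - x) := by rw [Real.volume_Ioc]

lemma stdGaussian_add (x y : ℝ) (hxy : x ≤ y) :
    stdGaussianCDF y = stdGaussianCDF x + (gaussianReal 0 1 (Set.Ioc x y)).toReal := by
  rw [stdGaussianCDF, stdGaussianCDF, ← ENNReal.toReal_add (measure_ne_top _ _) (measure_ne_top _ _)]
  congr 1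
  rw [← measure_union (Set.Iic_disjoint_Ioc le_rfl) measurableSet_Ioc, Set.Iic_union_Ioc_eq_Iic hxy]

lemma stdGaussianCDF_lipschitz : LipschitzWith 1 stdGaussianCDF := by
  refine LipschitzWith.of_dist_le_mul fun x y => ?_
  wlog h : y ≤ x generalizing x y
  · rw [dist_comm, dist_comm x y]; exact this y x (le_of_not_ge h)
  rw [NNReal.coe_one, one_mul, Real.dist_eq, Real.dist_eq, stdGaussian_add y x h,
    abs_of_nonneg (by linarith [abs_nonneg (x - y)] : (0:ℝ) ≤ x - y)]
  have hle := stdGaussian_Ioc_le y x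
  have : (gaussianReal 0 1 (Set.Ioc y x)).toReal ≤ x - y := by
    calc (gaussianReal 0 1 (Set.Ioc y x)).toReal ≤ (ENNReal.ofReal (x - y)).toReal :=
          ENNReal.toReal_mono ENNReal.ofReal_ne_top hle
      _ = x - y := ENNReal.toReal_ofReal (by linarith)
  have h0 : (0:ℝ) ≤ (gaussianReal 0 1 (Set.Ioc y x)).toReal := ENNReal.toReal_nonneg
  rw [abs_of_nonneg (by linarith)]
  linarith

lemma stdGaussianCDF_strictMono : StrictMono stdGaussianCDF := by
  intro x y hxy
  rw [stdGaussian_add x y hxy.le]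
  have hpos : 0 < gaussianReal 0 1 (Set.Ioc x y) := by
    by_contra h
    push_neg at h
    have h0 : gaussianReal 0 1 (Set.Ioc x y) = 0 := le_antisymm h bot_le
    have := gaussianReal_absolutelyContinuous' 0 one_ne_zero h0
    rw [Real.volume_Ioc] at this
    exact absurd this (by simp [hxy, sub_pos.mpr hxy])
  have := ENNReal.toReal_pos hpos.ne' (measure_ne_top _ _)
  linarith

lemma stdGaussianCDF_continuous : Continuous stdGaussianCDF :=
  stdGaussianCDF_lipschitz.continuous

lemma gaussianReal_singleton {v : ℝ≥0} (hv : v ≠ 0) (m x : ℝ) :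
    gaussianReal m v {x} = 0 :=
  gaussianReal_absolutelyContinuous m hv (Real.volume_singleton)

lemma gaussianReal_Ioi_eq_Iio {v : ℝ≥0} (a : ℝ) :
    gaussianReal 0 v (Set.Ioi a) = gaussianReal 0 v (Set.Iio (-a)) := by
  have hmap := gaussianReal_map_const_mul (μ := 0) (v := v) (-1)
  have hv' : (⟨(-1:ℝ)^2, sq_nonneg _⟩ : ℝ≥0) = 1 := by ext; norm_num
  replace hmap : (gaussianReal 0 v).map ((-1:ℝ) * ·) = gaussianReal 0 v := by
    rw [hmap]; congr 1
    · simp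
    · ext; simp
  calc gaussianReal 0 v (Set.Ioi a) = ((gaussianReal 0 v).map ((-1:ℝ) * ·)) (Set.Ioi a) := by
        rw [hmap]
    _ = gaussianReal 0 v (((-1:ℝ) * ·) ⁻¹' (Set.Ioi a)) :=
        Measure.map_apply (measurable_id.const_mul _) measurableSet_Ioi
    _ = gaussianReal 0 v (Set.Iio (-a)) := by
        congr 1
        ext x
        simp only [Set.mem_preimage, Set.mem_Ioi, Set.mem_Iio]
        constructor <;> intro h <;> linarith

lemma gaussianReal_Iic_scale {σ2 : ℝ} (hσ2 : 0 < σ2) (t : ℝ) :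
    gaussianReal 0 σ2.toNNReal (Set.Iic t)
      = gaussianReal 0 1 (Set.Iic (t / Real.sqrt σ2)) := by
  set σ := Real.sqrt σ2 with hσdef
  have hσ : 0 < σ := Real.sqrt_pos.mpr hσ2
  have hmap := gaussianReal_map_const_mul (μ := 0) (v := 1) σ
  have hv' : (⟨σ^2, sq_nonneg _⟩ : ℝ≥0) * 1 = σ2.toNNReal := by
    ext
    simp [hσdef, Real.sq_sqrt hσ2.le, Real.coe_toNNReal _ hσ2.le]
  replace hmap : (gaussianReal 0 1).map (σ * ·) = gaussianReal 0 σ2.toNNReal := by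
    rw [hmap]; congr 1
    simp [← NNReal.coe_inj, hσdef, Real.sq_sqrt hσ2.le, Real.coe_toNNReal _ hσ2.le]
  calc gaussianReal 0 σ2.toNNReal (Set.Iic t)
      = ((gaussianReal 0 1).map (σ * ·)) (Set.Iic t) := by rw [hmap]
    _ = gaussianReal 0 1 ((σ * ·) ⁻¹' (Set.Iic t)) :=
        Measure.map_apply (measurable_id.const_mul _) measurableSet_Iic
    _ = gaussianReal 0 1 (Set.Iic (t / σ)) := by
        congr 1
        ext x
        simp only [Set.mem_preimage, Set.mem_Iic]
        rw [← le_div_iff₀' hσ]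

lemma gaussianReal_tail {σ2 : ℝ} (hσ2 : 0 < σ2) {a : ℝ} (ha : 0 ≤ a) :
    (gaussianReal 0 σ2.toNNReal {x : ℝ | a < |x|}).toReal
      = 2 * stdGaussianCDF (-a / Real.sqrt σ2) := by
  have hv : σ2.toNNReal ≠ 0 := by
    simp [Real.toNNReal_eq_zero, not_le, hσ2]
  set γ := gaussianReal 0 σ2.toNNReal with hγ
  have hset : {x : ℝ | a < |x|} = Set.Iio (-a) ∪ Set.Ioi a := by
    ext x
    simp only [Set.mem_setOf_eq, Set.mem_union, Set.mem_Iio, Set.mem_Ioi]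
    rw [lt_abs]
    constructor
    · rintro (h | h)
      exacts [Or.inr h, Or.inl (by linarith)]
    · rintro (h | h)
      exacts [Or.inr (by linarith), Or.inl h]
  have hdisj : Disjoint (Set.Iio (-a)) (Set.Ioi a) := by
    rw [Set.disjoint_left]
    intro x hx hx'
    simp only [Set.mem_Iio, Set.mem_Ioi] at hx hx'
    linarith
  have hIio : γ (Set.Iio (-a)) = γ (Set.Iic (-a)) := by
    rw [← Set.Iio_union_right (a := -a), measure_union (by simp) (measurableSet_singleton _),
      gaussianReal_singleton hv, add_zero]
  rw [hset, measure_union hdisj measurableSet_Ioi, gaussianReal_Ioi_eq_Iio, hIio,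
    ENNReal.toReal_add (measure_ne_top _ _) (measure_ne_top _ _), hγ,
    gaussianReal_Iic_scale hσ2]
  rw [stdGaussianCDF]
  ring

lemma tendsto_tail_measure {Ω : Type*} [MeasurableSpace Ω] (P : Measure Ω)
    [IsProbabilityMeasure P] {v : ℝ≥0} (hv : v ≠ 0) (Sn : ℕ → Ω → ℝ)
    (hSmeas : ∀ n, Measurable (Sn n))
    (hS : TendstoInDistribution P Sn (gaussianReal 0 v)) (a : ℝ) :
    Tendsto (fun n => (P {ω | a < |Sn n ω|}).toReal) atTop
      (𝓝 ((gaussianReal 0 v {x : ℝ | a < |x|}).toReal)) := by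
  set μn : ℕ → ProbabilityMeasure ℝ :=
    fun n => ⟨P.map (Sn n), Measure.isProbabilityMeasure_map (hSmeas n).aemeasurable⟩ with hμn
  set μ : ProbabilityMeasure ℝ := ⟨gaussianReal 0 v, inferInstance⟩ with hμ
  have hlim : Tendsto μn atTop (𝓝 μ) := by
    rw [ProbabilityMeasure.tendsto_iff_forall_integral_tendsto]
    intro f
    have h := hS f
    convert h using 2 with n
    · exact integral_map (hSmeas n).aemeasurable f.continuous.aestronglyMeasurable
    · rfl
  set E : Set ℝ := {x | a < |x|} with hE
  have hEopen : IsOpen E := isOpen_lt continuous_const continuous_abs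
  have hnull : (μ : Measure ℝ) (frontier E) = 0 := by
    have hsub : frontier E ⊆ {-a, a} := by
      intro x hx
      have h1 : x ∈ closure E := hx.1
      have h2 : x ∉ E := by
        rw [hEopen.frontier_eq] at hx
        exact hx.2
      have hcl : closure E ⊆ {x : ℝ | a ≤ |x|} :=
        closure_minimal (fun y (hy : a < |y|) => le_of_lt hy) (isClosed_le continuous_const continuous_abs)
      have h3 : a ≤ |x| := hcl h1
      have h4 : ¬ a < |x| := h2
      have h5 : |x| = a := le_antisymm (not_lt.mp h4) h3
      rcases abs_eq (le_trans (abs_nonneg x) h5.le) |>.mp h5 with h | h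
      · exact Or.inr h
      · exact Or.inl h
    refine measure_mono_null hsub ?_
    have : ({-a, a} : Set ℝ) = {-a} ∪ {a} := rfl
    rw [this]
    refine le_antisymm ((measure_union_le _ _).trans ?_) bot_le
    have e1 : (μ : Measure ℝ) {-a} = 0 := gaussianReal_singleton hv 0 _
    have e2 : (μ : Measure ℝ) {a} = 0 := gaussianReal_singleton hv 0 _
    rw [e1, e2, add_zero]
  have key := ProbabilityMeasure.tendsto_measure_of_null_frontier_of_tendsto' hlim hnull
  have key2 := (ENNReal.tendsto_toReal (measure_ne_top (μ : Measure ℝ) E)).comp key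
  convert key2 using 2 with n
  show (P {ω | a < |Sn n ω|}).toReal = ((P.map (Sn n)) E).toReal
  rw [Measure.map_apply (hSmeas n) hEopen.measurableSet]
  rfl
  rfl

/-- **Corollaries 1 and 2 of the paper (abstract form).**
If `S_n →ᵈ N(0, v₁ + ν v₂)` and `B_n →ᵖ v₁ + v₂` with `B_n > 0`, then for every `c > 0`
the rejection probability `P(|S_n|/√B_n > c)` converges to
`2 Φ(-c √((v₁+v₂)/(v₁+ν v₂)))`; this limit is at most `2 Φ(-c)`, with strict
inequality if and only if `ν < 1` and `v₂ > 0`. -/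
theorem score_test_conservativeness
    {Ω : Type*} [MeasurableSpace Ω] (P : Measure Ω) [IsProbabilityMeasure P]
    (v1 v2 ν : ℝ) (hv1 : 0 < v1) (hv2 : 0 ≤ v2) (hν0 : 0 ≤ ν) (hν1 : ν ≤ 1)
    (Sn Bn : ℕ → Ω → ℝ)
    (hSmeas : ∀ n, Measurable (Sn n)) (hBmeas : ∀ n, Measurable (Bn n))
    (hBpos : ∀ n ω, 0 < Bn n ω)
    (hS : TendstoInDistribution P Sn (gaussianReal 0 ((v1 + ν * v2).toNNReal)))
    (hB : TendstoInMeasure P Bn atTop (fun _ => v1 + v2)) :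
    ∀ c : ℝ, 0 < c →
      (Tendsto (fun n => (P {ω | c < |Sn n ω| / Real.sqrt (Bn n ω)}).toReal) atTop
        (𝓝 (2 * stdGaussianCDF (-c * Real.sqrt ((v1 + v2) / (v1 + ν * v2))))))
      ∧ 2 * stdGaussianCDF (-c * Real.sqrt ((v1 + v2) / (v1 + ν * v2)))
          ≤ 2 * stdGaussianCDF (-c)
      ∧ (2 * stdGaussianCDF (-c * Real.sqrt ((v1 + v2) / (v1 + ν * v2)))
          < 2 * stdGaussianCDF (-c) ↔ ν < 1 ∧ 0 < v2) := by
  intro c hc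
  set σ2 : ℝ := v1 + ν * v2 with hσ2def
  set b : ℝ := v1 + v2 with hbdef
  have hσ2 : 0 < σ2 := by have := mul_nonneg hν0 hv2; simp only [hσ2def]; linarith
  have hb : 0 < b := by simp only [hbdef]; linarith
  have hσ2b : σ2 ≤ b := by have : ν * v2 ≤ v2 := by nlinarith
                           simp only [hσ2def, hbdef]; linarith
  have hv : σ2.toNNReal ≠ 0 := by simp [Real.toNNReal_eq_zero, not_le, hσ2]
  set G : ℝ → ℝ := fun t => 2 * stdGaussianCDF (-(c * Real.sqrt t) / Real.sqrt σ2) with hGdef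
  have hGb : G b = 2 * stdGaussianCDF (-c * Real.sqrt (b / σ2)) := by
    simp only [hGdef]
    congr 2
    rw [Real.sqrt_div' b (le_of_lt hσ2)]
    ring
  -- limit of tail probabilities at level a = c * sqrt t, for t > 0
  have hAn : ∀ t : ℝ, 0 < t →
      Tendsto (fun n => (P {ω | c * Real.sqrt t < |Sn n ω|}).toReal) atTop (𝓝 (G t)) := by
    intro t ht
    have h0 : 0 ≤ c * Real.sqrt t := mul_nonneg hc.le (Real.sqrt_nonneg _)
    have := tendsto_tail_measure P hv Sn hSmeas hS (c * Real.sqrt t)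
    rwa [gaussianReal_tail hσ2 h0, show -(c * Real.sqrt t) / Real.sqrt σ2
        = - (c * Real.sqrt t) / Real.sqrt σ2 by ring] at this
  have hGcont : Continuous G :=
    continuous_const.mul (stdGaussianCDF_continuous.comp
      (((continuous_const.mul Real.continuous_sqrt).neg).div_const _))
  -- rewrite the event
  have hsetEq : ∀ n, {ω | c < |Sn n ω| / Real.sqrt (Bn n ω)}
      = {ω | c * Real.sqrt (Bn n ω) < |Sn n ω|} := by
    intro n
    ext ω
    simp only [Set.mem_setOf_eq]
    rw [lt_div_iff₀ (Real.sqrt_pos.mpr (hBpos n ω))]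
  refine ⟨?_, ?_, ?_⟩
  · -- the main limit
    rw [← hGb]
    simp only [hsetEq]
    rw [Metric.tendsto_atTop]
    intro δ hδ
    obtain ⟨ε₀, hε₀, hcont⟩ := Metric.continuousAt_iff.mp (hGcont.continuousAt (x := b)) (δ/4)
      (by linarith)
    set ε : ℝ := min (ε₀/2) (b/2) with hεdef
    have hε : 0 < ε := by positivity
    have hεb : ε < b := lt_of_le_of_lt (min_le_right _ _) (by linarith)
    have hεε₀ : ε < ε₀ := lt_of_le_of_lt (min_le_left _ _) (by linarith)
    have hlo : |G (b - ε) - G b| < δ/4 := by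
      have := hcont (x := b - ε) (by rw [Real.dist_eq]; rw [abs_lt]; constructor <;> linarith)
      rwa [Real.dist_eq] at this
    have hhi : |G (b + ε) - G b| < δ/4 := by
      have := hcont (x := b + ε) (by rw [Real.dist_eq]; rw [abs_lt]; constructor <;> linarith)
      rwa [Real.dist_eq] at this
    have h1 := Metric.tendsto_nhds.mp (hAn (b - ε) (by linarith)) (δ/4) (by linarith)
    have h2 := Metric.tendsto_nhds.mp (hAn (b + ε) (by linarith)) (δ/4) (by linarith)
    have h3' := tendstoInMeasure_iff_dist.mp hB ε hε
    have h3 := Metric.tendsto_nhds.mp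
      ((ENNReal.tendsto_toReal ENNReal.zero_ne_top).comp h3') (δ/4) (by linarith)
    rw [← Filter.eventually_atTop]
    filter_upwards [h1, h2, h3] with n e1 e2 e3
    -- abbreviations
    set x : ℝ := (P {ω | c * Real.sqrt (Bn n ω) < |Sn n ω|}).toReal with hxdef
    set xlo : ℝ := (P {ω | c * Real.sqrt (b - ε) < |Sn n ω|}).toReal with hxlodef
    set xhi : ℝ := (P {ω | c * Real.sqrt (b + ε) < |Sn n ω|}).toReal with hxhidef
    set en : ℝ := (P {ω | ε ≤ dist (Bn n ω) b}).toReal with hendef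
    rw [Real.dist_eq] at e1 e2
    have e3' : en < δ/4 := by
      have : dist en 0 < δ/4 := e3
      rwa [Real.dist_eq, sub_zero, abs_of_nonneg ENNReal.toReal_nonneg] at this
    have key1 : x ≤ xlo + en := by
      have hsub : {ω | c * Real.sqrt (Bn n ω) < |Sn n ω|}
          ⊆ {ω | c * Real.sqrt (b - ε) < |Sn n ω|} ∪ {ω | ε ≤ dist (Bn n ω) b} := by
        intro ω hω
        by_cases hd : ε ≤ dist (Bn n ω) b
        · exact Or.inr hd
        · left
          push_neg at hd
          rw [Real.dist_eq, abs_lt] at hd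
          have hB' : b - ε ≤ Bn n ω := by linarith [hd.1]
          have : Real.sqrt (b - ε) ≤ Real.sqrt (Bn n ω) := Real.sqrt_le_sqrt hB'
          have hω' : c * Real.sqrt (Bn n ω) < |Sn n ω| := hω
          calc c * Real.sqrt (b - ε) ≤ c * Real.sqrt (Bn n ω) :=
                mul_le_mul_of_nonneg_left this hc.le
            _ < |Sn n ω| := hω'
      calc x ≤ (P ({ω | c * Real.sqrt (b - ε) < |Sn n ω|} ∪ {ω | ε ≤ dist (Bn n ω) b})).toReal :=
            ENNReal.toReal_mono (measure_ne_top _ _) (measure_mono hsub)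
        _ ≤ xlo + en := by
            rw [hxlodef, hendef, ← ENNReal.toReal_add (measure_ne_top _ _) (measure_ne_top _ _)]
            exact ENNReal.toReal_mono
              (ENNReal.add_ne_top.mpr ⟨measure_ne_top _ _, measure_ne_top _ _⟩)
              (measure_union_le _ _)
    have key2 : xhi ≤ x + en := by
      have hsub : {ω | c * Real.sqrt (b + ε) < |Sn n ω|}
          ⊆ {ω | c * Real.sqrt (Bn n ω) < |Sn n ω|} ∪ {ω | ε ≤ dist (Bn n ω) b} := by
        intro ω hω
        by_cases hd : ε ≤ dist (Bn n ω) b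
        · exact Or.inr hd
        · left
          push_neg at hd
          rw [Real.dist_eq, abs_lt] at hd
          have hB' : Bn n ω ≤ b + ε := by linarith [hd.2]
          have : Real.sqrt (Bn n ω) ≤ Real.sqrt (b + ε) := Real.sqrt_le_sqrt hB'
          have hω' : c * Real.sqrt (b + ε) < |Sn n ω| := hω
          calc c * Real.sqrt (Bn n ω) ≤ c * Real.sqrt (b + ε) :=
                mul_le_mul_of_nonneg_left this hc.le
            _ < |Sn n ω| := hω'
      calc xhi ≤ (P ({ω | c * Real.sqrt (Bn n ω) < |Sn n ω|}
              ∪ {ω | ε ≤ dist (Bn n ω) b})).toReal :=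
            ENNReal.toReal_mono (measure_ne_top _ _) (measure_mono hsub)
        _ ≤ x + en := by
            rw [hxdef, hendef, ← ENNReal.toReal_add (measure_ne_top _ _) (measure_ne_top _ _)]
            exact ENNReal.toReal_mono
              (ENNReal.add_ne_top.mpr ⟨measure_ne_top _ _, measure_ne_top _ _⟩)
              (measure_union_le _ _)
    rw [Real.dist_eq, abs_lt]
    rw [abs_lt] at e1 e2 hlo hhi
    constructor
    · -- G b - δ < x
      have : G (b + ε) - δ/4 - en ≤ x := by linarith [e2.1]
      linarith [hhi.1, e3', e2.1]
    · have : x ≤ G (b - ε) + δ/4 + en := by linarith [e1.2]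
      linarith [hlo.2, e3', e1.2]
  · -- the inequality
    have h1 : 1 ≤ Real.sqrt (b / σ2) := by
      rw [show (1:ℝ) = Real.sqrt 1 from (Real.sqrt_one).symm]
      exact Real.sqrt_le_sqrt ((one_le_div hσ2).mpr hσ2b)
    have harg : -c * Real.sqrt (b / σ2) ≤ -c := by nlinarith
    have := stdGaussianCDF_strictMono.monotone harg
    linarith
  · -- strict inequality iff
    have hmono := stdGaussianCDF_strictMono
    constructor
    · intro hlt
      have h2 : stdGaussianCDF (-c * Real.sqrt (b / σ2)) < stdGaussianCDF (-c) := by linarith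
      have h3 : -c * Real.sqrt (b / σ2) < -c := hmono.lt_iff_lt.mp h2
      have h4 : 1 < Real.sqrt (b / σ2) := by nlinarith
      have h5 : 1 < b / σ2 := by
        by_contra h
        push_neg at h
        have : Real.sqrt (b / σ2) ≤ 1 := by
          rw [show (1:ℝ) = Real.sqrt 1 from (Real.sqrt_one).symm]
          exact Real.sqrt_le_sqrt h
        linarith
      have h6 : σ2 < b := by
        rw [one_lt_div hσ2] at h5
        exact h5
      have h7 : ν * v2 < v2 := by simp only [hσ2def, hbdef] at h6; linarith
      have hv2pos : 0 < v2 := by nlinarith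
      have hν : ν < 1 := by nlinarith
      exact ⟨hν, hv2pos⟩
    · rintro ⟨hν, hv2pos⟩
      have h7 : ν * v2 < v2 := by nlinarith
      have h6 : σ2 < b := by simp only [hσ2def, hbdef]; linarith
      have h5 : 1 < b / σ2 := (one_lt_div hσ2).mpr h6
      have h4 : 1 < Real.sqrt (b / σ2) := by
        rw [show (1:ℝ) = Real.sqrt 1 from (Real.sqrt_one).symm]
        exact Real.sqrt_lt_sqrt (by norm_num) h5
      have h3 : -c * Real.sqrt (b / σ2) < -c := by nlinarith
      have h2 := hmono h3
      linarith
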